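/- Closed form of Hardy's probability from the circuit amplitude: Let θ, φ, χ ∈ (0, π/2) be real numbers with cot χ = tan θ · cos φ. Then the squared modulus of the complex amplitude (1/2)·cosθ·cosχ·(1 − e^{−2iφ}) equals (sin²θ · cos²θ · sin²φ · cos²φ)/(cos²θ + sin²θ · cos²φ), i.e., |(1/2) cosθ cosχ (1 − e^{−2iφ})|² = q(θ, φ). -/

import Mathlib

/-- Hardy's probability for the two-qubit state of the Hardy test, as a function of
the state parameters θ and φ. -/
noncomputable def hardyQ (θ φ : ℝ) : ℝ :=
  (Real.sin θ ^ 2 * Real.cos θ ^ 2 * Real.sin φ ^ 2 * Real.cos φ ^ 2) /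
    (Real.cos θ ^ 2 + Real.sin θ ^ 2 * Real.cos φ ^ 2)

/-- Closed form of Hardy's probability from the circuit amplitude: if
cot χ = tan θ · cos φ with θ, φ, χ ∈ (0, π/2), then
|(1/2)·cos θ·cos χ·(1 − e^{−2iφ})|² = q(θ, φ). -/
theorem hardyQ_amplitude (θ φ χ : ℝ)
    (hθ : θ ∈ Set.Ioo (0 : ℝ) (Real.pi / 2))
    (hφ : φ ∈ Set.Ioo (0 : ℝ) (Real.pi / 2))
    (hχ : χ ∈ Set.Ioo (0 : ℝ) (Real.pi / 2))
    (hcot : Real.cot χ = Real.tan θ * Real.cos φ) :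
    ‖(1 / 2 : ℂ) * (Real.cos θ : ℂ) * (Real.cos χ : ℂ) *
        (1 - Complex.exp (-(2 * (φ : ℂ)) * Complex.I))‖ ^ 2 = hardyQ θ φ := by
  obtain ⟨hθ0, hθ1⟩ := hθ
  obtain ⟨hφ0, hφ1⟩ := hφ
  obtain ⟨hχ0, hχ1⟩ := hχ
  have hcθ : 0 < Real.cos θ := Real.cos_pos_of_mem_Ioo ⟨by linarith [Real.pi_pos], hθ1⟩
  have hsθ : 0 < Real.sin θ := Real.sin_pos_of_pos_of_lt_pi hθ0 (by linarith [Real.pi_pos])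
  have hcφ : 0 < Real.cos φ := Real.cos_pos_of_mem_Ioo ⟨by linarith [Real.pi_pos], hφ1⟩
  have hsφ : 0 < Real.sin φ := Real.sin_pos_of_pos_of_lt_pi hφ0 (by linarith [Real.pi_pos])
  have hcχ : 0 < Real.cos χ := Real.cos_pos_of_mem_Ioo ⟨by linarith [Real.pi_pos], hχ1⟩
  have hsχ : 0 < Real.sin χ := Real.sin_pos_of_pos_of_lt_pi hχ0 (by linarith [Real.pi_pos])
  -- key relation: cos χ * cos θ = sin χ * sin θ * cos φ
  have hkey : Real.cos χ * Real.cos θ = Real.sin χ * Real.sin θ * Real.cos φ := by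
    rw [Real.cot_eq_cos_div_sin, Real.tan_eq_sin_div_cos] at hcot
    field_simp at hcot
    linarith [hcot]
  have hpyθ : Real.sin θ ^ 2 + Real.cos θ ^ 2 = 1 := Real.sin_sq_add_cos_sq θ
  have hpyχ : Real.sin χ ^ 2 + Real.cos χ ^ 2 = 1 := Real.sin_sq_add_cos_sq χ
  have hD : 0 < Real.cos θ ^ 2 + Real.sin θ ^ 2 * Real.cos φ ^ 2 := by positivity
  -- abs of the exponential factor
  have h1 : (-(2 * (φ:ℂ)) * Complex.I) = ((-(2*φ):ℝ):ℂ) * Complex.I := by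
    push_cast; ring
  have habs : ‖1 - Complex.exp (-(2 * (φ:ℂ)) * Complex.I)‖ ^ 2
      = 4 * Real.sin φ ^ 2 := by
    have hz : 1 - Complex.exp (-(2 * (φ:ℂ)) * Complex.I)
        = ((1 - Real.cos (-(2*φ)) : ℝ):ℂ) + ((-Real.sin (-(2*φ)) : ℝ):ℂ) * Complex.I := by
      rw [h1, Complex.exp_mul_I, ← Complex.ofReal_cos, ← Complex.ofReal_sin]
      push_cast; ring
    rw [hz, Complex.sq_norm, Complex.normSq_add_mul_I]
    have hc2 : Real.cos (-(2*φ)) = 1 - 2 * Real.sin φ ^ 2 := by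
      rw [Real.cos_neg]
      have := Real.cos_two_mul' φ
      rw [this]; nlinarith [Real.sin_sq_add_cos_sq φ]
    have hs2 : Real.sin (-(2*φ)) ^ 2 = (2 * Real.sin φ * Real.cos φ) ^ 2 := by
      rw [Real.sin_neg, Real.sin_two_mul]; ring
    nlinarith [Real.sin_sq_add_cos_sq φ, hc2, hs2]
  rw [norm_mul, norm_mul, norm_mul]
  rw [Complex.norm_real, Complex.norm_real, Real.norm_eq_abs, Real.norm_eq_abs]
  have : ‖(1/2 : ℂ)‖ = 1/2 := by norm_num
  rw [this, abs_of_pos hcθ, abs_of_pos hcχ, mul_pow, mul_pow, habs, hardyQ]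
  have hkey2 : (Real.cos χ * Real.cos θ)^2 = (Real.sin χ * Real.sin θ * Real.cos φ)^2 := by
    rw [hkey]
  have hχsq : Real.cos χ ^ 2 * (Real.cos θ ^ 2 + Real.sin θ ^ 2 * Real.cos φ ^ 2)
      = Real.sin θ ^ 2 * Real.cos φ ^ 2 := by
    linear_combination hkey2 + (Real.sin θ * Real.cos φ)^2 * hpyχ
  rw [eq_div_iff hD.ne']
  linear_combination (Real.sin φ^2 * Real.cos θ^2) * hχsq
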